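/- Let V be a finite set and let f : ℝ^V → ℝ be a measurable, nonnegative probability density function (its integral over ℝ^V equals 1). For A ⊆ V let f_A denote the marginal density of f on the coordinates in A (the integral of f over the remaining coordinates), and for v ∈ V let F_v(t) = ∫_{−∞}^t f_{{v}}(s) ds. Assume each one-dimensional marginal density f_{{v}} is everywhere positive and each F_v is a strictly increasing continuous bijection from ℝ onto (0,1). Suppose f factorizes according to a junction tree T on V, i.e., for all x ∈ ℝ^V: f(x) · ∏_{edges {i,j} of T} f_{C_i ∩ C_j}(x restricted to C_i ∩ C_j) = ∏_{nodes i of T} f_{C_i}(x restricted to C_i). For A ⊆ V define the copula density c_A : (0,1)^A → ℝ by c_A(u) = f_A((F_v^{−1}(u_v))_{v ∈ A}) / ∏_{v ∈ A} f_{{v}}(F_v^{−1}(u_v)). Then for all u ∈ (0,1)^V: c_V(u) · ∏_{edges {i,j} of T} c_{C_i ∩ C_j}(u restricted to C_i ∩ C_j) = ∏_{nodes i of T} c_{C_i}(u restricted to C_i). (The copula density associated to a junction tree density factorizes according to the same junction tree.) -/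

import Mathlib

/-- A junction tree on a vertex set `V`: a finite tree `G` with nodes labeled by
clusters (finite subsets of `V`), such that no cluster is contained in the cluster
of another node and the running intersection property holds.  (The covering
condition "the clusters cover `V`" is stated separately as `JTree.CoversAll`,
so that junction trees on subsets of `V`, such as the tree formed by the
separators, can be treated uniformly.) -/
structure JTree (V : Type) [DecidableEq V] where
  ι : Type
  [fin : Fintype ι]
  [deq : DecidableEq ι]
  G : SimpleGraph ι
  isTree : G.IsTree
  C : ι → Finset V
  noSub : ∀ i j : ι, i ≠ j → ¬ C i ⊆ C j
  rip : ∀ (i j : ι) (p : G.Walk i j), p.IsPath → ∀ x ∈ p.support, C i ∩ C j ⊆ C x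

attribute [instance] JTree.fin JTree.deq

namespace JTree

variable {V : Type} [DecidableEq V]

/-- The clusters cover all of `V`: the junction tree is a junction tree "on `V`". -/
def CoversAll (T : JTree V) : Prop := ∀ v : V, ∃ i, v ∈ T.C i

/-- `T` is a `k`-order cherry tree: every cluster has exactly `k` elements and
every edge-separator has exactly `k - 1` elements. -/
def IsCherry (T : JTree V) (k : ℕ) : Prop :=
  (∀ i, (T.C i).card = k) ∧ ∀ i j, T.G.Adj i j → (T.C i ∩ T.C j).card = k - 1

/-- The set of (distinct) separators of `T`. -/
def separators (T : JTree V) : Set (Finset V) :=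
  { s | ∃ i j, T.G.Adj i j ∧ s = T.C i ∩ T.C j }

/-- The separators of `T` form a `(k-1)`-order cherry tree: there is a junction
tree whose set of clusters is exactly the set of distinct separators of `T`, in
which every cluster has `k - 1` elements and every edge-separator has `k - 2`
elements. -/
def SeparatorsFormCherry (T : JTree V) (k : ℕ) : Prop :=
  ∃ T' : JTree V, T'.IsCherry (k - 1) ∧ Set.range T'.C = T.separators

/-- Every cluster of `T'` is the union of two clusters that are adjacent in `T`. -/
def Succ (T T' : JTree V) : Prop :=
  ∀ i' : T'.ι, ∃ i j : T.ι, T.G.Adj i j ∧ T'.C i' = T.C i ∪ T.C j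

/-- `T` is a truncated R-vine at level `k`: there exists a cherry-vine sequence
`T₂, …, T_k` on `V` (with `T_m` an `m`-order cherry tree on `V` and each cluster of
`T_{m+1}` the union of two adjacent clusters of `T_m`) whose top tree `T_k` is `T`. -/
def IsTruncatedRVine (T : JTree V) (k : ℕ) : Prop :=
  ∃ Ts : ℕ → JTree V,
    (∀ m, 2 ≤ m → m ≤ k → (Ts m).CoversAll ∧ (Ts m).IsCherry m) ∧
    (∀ m, 2 ≤ m → m < k → Succ (Ts m) (Ts (m + 1))) ∧
    Ts k = T

/-- The separator attached to an edge of the tree, as a function on `Sym2`. -/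
noncomputable def sep (T : JTree V) : Sym2 T.ι → Finset V :=
  Sym2.lift ⟨fun i j => T.C i ∩ T.C j, fun _ _ => Finset.inter_comm _ _⟩

/-- The (finite) set of edges of the tree underlying `T`. -/
noncomputable def edgeFinset (T : JTree V) : Finset (Sym2 T.ι) :=
  Set.Finite.toFinset (Set.toFinite T.G.edgeSet)

end JTree

open MeasureTheory

/-- The marginal density of `f` on the coordinates in `A`, obtained by integrating
`f` over the coordinates outside `A` (as a function of the full vector `x`, it
depends only on the coordinates of `x` in `A`). -/
noncomputable def margDens {V : Type} [Fintype V] [DecidableEq V]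
    (f : (V → ℝ) → ℝ) (A : Finset V) (x : V → ℝ) : ℝ :=
  ∫ y : ({v : V // v ∉ A} → ℝ),
    f (fun v => if h : v ∈ A then x v else y ⟨v, h⟩)

/-- The one-dimensional marginal density `f_{{v}}` as a function on `ℝ`. -/
noncomputable def dens1 {V : Type} [Fintype V] [DecidableEq V]
    (f : (V → ℝ) → ℝ) (v : V) (s : ℝ) : ℝ :=
  margDens f {v} (fun _ => s)

/-- The cumulative distribution function `F_v(t) = ∫_{-∞}^{t} f_{{v}}(s) ds`. -/
noncomputable def cdf1 {V : Type} [Fintype V] [DecidableEq V]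
    (f : (V → ℝ) → ℝ) (v : V) (t : ℝ) : ℝ :=
  ∫ s in Set.Iic t, dens1 f v s

/-- The inverse `F_v⁻¹` of the cumulative distribution function. -/
noncomputable def qf1 {V : Type} [Fintype V] [DecidableEq V]
    (f : (V → ℝ) → ℝ) (v : V) (u : ℝ) : ℝ :=
  Function.invFun (cdf1 f v) u

/-- The copula density of the marginal of `f` on `A`:
`c_A(u) = f_A((F_v⁻¹(u_v))_{v ∈ A}) / ∏_{v ∈ A} f_{{v}}(F_v⁻¹(u_v))`. -/
noncomputable def copDens {V : Type} [Fintype V] [DecidableEq V]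
    (f : (V → ℝ) → ℝ) (A : Finset V) (u : V → ℝ) : ℝ :=
  margDens f A (fun v => qf1 f v (u v)) / ∏ v ∈ A, dens1 f v (qf1 f v (u v))


lemma walk_induce {α : Type*} {G : SimpleGraph α} {s : Set α} :
    ∀ {i j : α} (p : G.Walk i j), (∀ x ∈ p.support, x ∈ s) →
      ∀ (hi : i ∈ s) (hj : j ∈ s), (G.induce s).Reachable ⟨i, hi⟩ ⟨j, hj⟩ := by
  intro i j p
  induction p with
  | nil => intro _ hi hj; rfl
  | @cons a b c h q ih =>
    intro hsup hi hj
    have hb : b ∈ s := hsup b (by simp)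
    have hadj : (G.induce s).Adj ⟨a, hi⟩ ⟨b, hb⟩ := by
      simpa [SimpleGraph.comap_adj] using h
    exact hadj.reachable.trans (ih (fun x hx => hsup x (by simp [hx])) hb hj)

lemma sep_count {V : Type} [DecidableEq V] (T : JTree V) (hcov : T.CoversAll) (v : V) :
    (T.edgeFinset.filter (fun e => v ∈ T.sep e)).card + 1
      = (Finset.univ.filter (fun i : T.ι => v ∈ T.C i)).card := by
  classical
  set s : Set T.ι := {i | v ∈ T.C i} with hs
  have hmem : ∀ i : T.ι, i ∈ s ↔ v ∈ T.C i := fun i => Iff.rfl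
  -- the induced graph is a tree
  have hconn : (T.G.induce s).Connected := by
    obtain ⟨i0, hi0⟩ := hcov v
    haveI : Nonempty s := ⟨⟨i0, hi0⟩⟩
    refine ⟨fun a b => ?_⟩
    obtain ⟨a, ha⟩ := a
    obtain ⟨b, hb⟩ := b
    obtain ⟨w⟩ := T.isTree.isConnected.preconnected a b
    refine walk_induce w.bypass (fun x hx => ?_) ha hb
    exact T.rip a b w.bypass w.bypass_isPath x hx (Finset.mem_inter.mpr ⟨ha, hb⟩)
  have hac : (T.G.induce s).IsAcyclic := by
    intro x c hc
    exact T.isTree.IsAcyclic (c.map (SimpleGraph.Embedding.induce (G := T.G) s).toHom)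
      (hc.map (SimpleGraph.Embedding.induce (G := T.G) s).injective)
  have htree : (T.G.induce s).IsTree := ⟨hconn, hac⟩
  have hcard := htree.card_edgeFinset
  have h1 : (T.G.induce s).edgeFinset.card
      = (T.edgeFinset.filter (fun e => v ∈ T.sep e)).card := by
    refine Finset.card_bij (fun e _ => Sym2.map Subtype.val e) ?_ ?_ ?_
    · intro e he
      induction e with
      | _ a b =>
        obtain ⟨a, ha⟩ := a; obtain ⟨b, hb⟩ := b
        rw [SimpleGraph.mem_edgeFinset, SimpleGraph.mem_edgeSet] at he
        have hadj : T.G.Adj a b := by simpa [SimpleGraph.comap_adj] using he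
        simp only [Sym2.map_pair_eq, Finset.mem_filter]
        constructor
        · rw [JTree.edgeFinset, Set.Finite.mem_toFinset]
          exact hadj
        · show v ∈ T.sep s(a, b)
          rw [JTree.sep, Sym2.lift_mk]
          exact Finset.mem_inter.mpr ⟨ha, hb⟩
    · intro e1 h1 e2 h2 heq
      exact Sym2.map.injective Subtype.val_injective heq
    · intro e he
      rw [Finset.mem_filter] at he
      obtain ⟨he1, he2⟩ := he
      rw [JTree.edgeFinset, Set.Finite.mem_toFinset] at he1
      induction e with
      | _ a b =>
        have hadj : T.G.Adj a b := he1
        rw [JTree.sep, Sym2.lift_mk] at he2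
        have ha : a ∈ s := (Finset.mem_inter.mp he2).1
        have hb : b ∈ s := (Finset.mem_inter.mp he2).2
        refine ⟨s(⟨a, ha⟩, ⟨b, hb⟩), ?_, ?_⟩
        · rw [SimpleGraph.mem_edgeFinset, SimpleGraph.mem_edgeSet]
          simpa [SimpleGraph.comap_adj] using hadj
        · simp [Sym2.map_pair_eq]
  have h2 : Fintype.card s = (Finset.univ.filter (fun i : T.ι => v ∈ T.C i)).card := by
    rw [Fintype.card_subtype]
    rfl
  omega

/-- if a probability density `f` on `ℝ^V` (with everywhere positive
one-dimensional marginal densities whose cdfs are strictly increasing continuous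
bijections onto `(0,1)`) factorizes according to a junction tree `T` on `V`, then
the associated copula density factorizes according to the same junction tree:
for all `u ∈ (0,1)^V`,
`c_V(u) ⬝ ∏_{edges {i,j}} c_{C i ∩ C j}(u) = ∏_{nodes i} c_{C i}(u)`. -/
theorem junction_tree_copula_factorization
    {V : Type} [Fintype V] [DecidableEq V]
    (f : (V → ℝ) → ℝ) (hmeas : Measurable f) (hnn : ∀ x, 0 ≤ f x)
    (hint : ∫ x : V → ℝ, f x = 1)
    (hpos : ∀ v s, 0 < dens1 f v s)
    (hmono : ∀ v, StrictMono (cdf1 f v))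
    (hcont : ∀ v, Continuous (cdf1 f v))
    (hrange : ∀ v, Set.range (cdf1 f v) = Set.Ioo (0 : ℝ) 1)
    (T : JTree V) (hcov : T.CoversAll)
    (hfac : ∀ x : V → ℝ,
      f x * ∏ e ∈ T.edgeFinset, margDens f (T.sep e) x = ∏ i : T.ι, margDens f (T.C i) x) :
    ∀ u : V → ℝ, (∀ v, u v ∈ Set.Ioo (0 : ℝ) 1) →
      copDens f Finset.univ u * ∏ e ∈ T.edgeFinset, copDens f (T.sep e) u
        = ∏ i : T.ι, copDens f (T.C i) u := by
  classical
  intro u _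
  set x : V → ℝ := fun v => qf1 f v (u v) with hxdef
  set d : V → ℝ := fun v => dens1 f v (x v) with hddef
  have hd : ∀ v, 0 < d v := fun v => hpos v _
  have hx := hfac x
  -- the full marginal is `f` itself
  have hmu : margDens f Finset.univ x = f x := by
    rw [margDens]
    have heq : ∀ y : ({v : V // v ∉ (Finset.univ : Finset V)} → ℝ),
        (fun v => if h : v ∈ (Finset.univ : Finset V) then x v else y ⟨v, h⟩) = x :=
      fun y => funext fun v => dif_pos (Finset.mem_univ v)
    simp only [heq]
    haveI : IsEmpty {v : V // v ∉ (Finset.univ : Finset V)} :=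
      ⟨fun ⟨v, hv⟩ => hv (Finset.mem_univ v)⟩
    rw [MeasureTheory.integral_const]
    have : (volume : Measure ({v : V // v ∉ (Finset.univ : Finset V)} → ℝ)) Set.univ = 1 := by
      rw [MeasureTheory.volume_pi, MeasureTheory.Measure.pi_empty_univ]
    rw [MeasureTheory.measureReal_def, this]
    simp
  -- rewrite all copula densities as quotients at the point x
  have hcop : ∀ A : Finset V, copDens f A u = margDens f A x / ∏ w ∈ A, d w := fun A => rfl
  simp only [hcop]
  rw [Finset.prod_div_distrib, Finset.prod_div_distrib, hmu, div_mul_div_comm, ← hx]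
  congr 1
  -- it remains to prove the denominators agree
  have hcount : ∀ w : V,
      (T.edgeFinset.filter (fun e => w ∈ T.sep e)).card + 1
        = (Finset.univ.filter (fun i : T.ι => w ∈ T.C i)).card :=
    fun w => sep_count T hcov w
  have hE : ∏ e ∈ T.edgeFinset, ∏ w ∈ T.sep e, d w
      = ∏ w : V, d w ^ (T.edgeFinset.filter (fun e => w ∈ T.sep e)).card := by
    rw [Finset.prod_comm' (t' := Finset.univ)
      (s' := fun w => T.edgeFinset.filter (fun e => w ∈ T.sep e))
      (f := fun _ w => d w) (by intro e w; simp [Finset.mem_filter, and_comm])]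
    simp [Finset.prod_const]
  have hC : ∏ i : T.ι, ∏ w ∈ T.C i, d w
      = ∏ w : V, d w ^ (Finset.univ.filter (fun i : T.ι => w ∈ T.C i)).card := by
    rw [Finset.prod_comm' (t' := Finset.univ)
      (s' := fun w => Finset.univ.filter (fun i : T.ι => w ∈ T.C i))
      (f := fun _ w => d w) (by intro i w; simp [Finset.mem_filter])]
    simp [Finset.prod_const]
  rw [hE, hC, ← Finset.prod_mul_distrib]
  refine Finset.prod_congr rfl fun w _ => ?_
  rw [← pow_succ', hcount w]
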